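/- Let n ≥ 1, ε ∈ (0,1), and let S ∈ ℝ^{n×n} be any matrix satisfying ‖𝟏 − S‖₂ ≤ εn, where 𝟏 is the n×n all-ones matrix. Then for every positive semidefinite matrix A ∈ ℝ^{n×n} with ‖A‖∞ ≤ 1, one has ‖A − A∘S‖₂ ≤ εn. -/

import Mathlib

open Matrix BigOperators

/-- The spectral (operator) norm of a real square matrix. -/
noncomputable def specNorm {m : ℕ} (M : Matrix (Fin m) (Fin m) ℝ) : ℝ :=
  ‖LinearMap.toContinuousLinearMap (Matrix.toEuclideanLin M)‖

/-- The `n × n` all-ones matrix. -/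
def allOnes (m : ℕ) : Matrix (Fin m) (Fin m) ℝ := Matrix.of fun _ _ => 1

/-- Euclidean norm of a vector in `ℝⁿ`. -/
noncomputable def vnorm {m : ℕ} (x : Fin m → ℝ) : ℝ := Real.sqrt (∑ i, (x i) ^ 2)

/-- The (unsorted) singular values of a real square matrix: square roots of the
eigenvalues of `Aᵀ A`. -/
noncomputable def svRaw {m : ℕ} (A : Matrix (Fin m) (Fin m) ℝ) : Fin m → ℝ :=
  fun j => Real.sqrt ((show (Aᵀ * A).IsHermitian by
    simpa [Matrix.conjTranspose_eq_transpose_of_trivial] using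
      Matrix.isHermitian_conjTranspose_mul_self A).eigenvalues j)

/-- `sval A i` is the `i`-th largest singular value of `A` (1-based indexing);
it is `0` for `i = 0` and for `i > m`. -/
noncomputable def sval {m : ℕ} (A : Matrix (Fin m) (Fin m) ℝ) (i : ℕ) : ℝ :=
  if h : 1 ≤ i ∧ i ≤ m then (svRaw A ∘ Tuple.sort (svRaw A)) ⟨m - i, by omega⟩ else 0

/-- The nuclear (Schatten-1) norm of a real square matrix: the sum of its singular values. -/
noncomputable def nuclearNorm {m : ℕ} (A : Matrix (Fin m) (Fin m) ℝ) : ℝ :=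
  ∑ j, svRaw A j

/-- The smallest eigenvalue of a symmetric real matrix, via the Rayleigh quotient. -/
noncomputable def lamMin {m : ℕ} (A : Matrix (Fin m) (Fin m) ℝ) : ℝ :=
  sInf {r : ℝ | ∃ x : Fin m → ℝ, vnorm x = 1 ∧ r = x ⬝ᵥ (A *ᵥ x)}

open scoped RealInnerProductSpace

lemma vnorm_eq' {m : ℕ} (x : Fin m → ℝ) :
    vnorm x = ‖(WithLp.equiv 2 (Fin m → ℝ)).symm x‖ := by
  rw [EuclideanSpace.norm_eq]
  simp [vnorm, sq_abs]

lemma vnorm_nonneg' {m : ℕ} (x : Fin m → ℝ) : 0 ≤ vnorm x := Real.sqrt_nonneg _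

lemma vnorm_sq' {m : ℕ} (x : Fin m → ℝ) : vnorm x ^ 2 = ∑ i, (x i) ^ 2 := by
  rw [vnorm, Real.sq_sqrt (Finset.sum_nonneg fun i _ => sq_nonneg _)]

lemma dot_le' {m : ℕ} (M : Matrix (Fin m) (Fin m) ℝ) (x y : Fin m → ℝ) :
    |x ⬝ᵥ (M *ᵥ y)| ≤ specNorm M * (vnorm x * vnorm y) := by
  set T := LinearMap.toContinuousLinearMap (Matrix.toEuclideanLin M) with hT
  set u := (WithLp.equiv 2 (Fin m → ℝ)).symm x with hu
  set v := (WithLp.equiv 2 (Fin m → ℝ)).symm y with hv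
  have h1 : x ⬝ᵥ (M *ᵥ y) = ⟪u, T v⟫ := by
    simp [hT, hu, hv, LinearMap.coe_toContinuousLinearMap',
      Matrix.toEuclideanLin_apply, PiLp.inner_apply, RCLike.inner_apply,
      PiLp.toLp_apply, dotProduct, mul_comm]
  rw [h1]
  have h2 : |⟪u, T v⟫| ≤ ‖u‖ * ‖T v‖ := abs_real_inner_le_norm _ _
  have h3 : ‖T v‖ ≤ ‖T‖ * ‖v‖ := T.le_opNorm _
  have h4 : specNorm M = ‖T‖ := rfl
  rw [h4, vnorm_eq', vnorm_eq', ← hu, ← hv]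
  nlinarith [norm_nonneg u, norm_nonneg v, norm_nonneg (T v), abs_nonneg ⟪u, T v⟫]

lemma specNorm_le_of' {m : ℕ} (M : Matrix (Fin m) (Fin m) ℝ) (c : ℝ) (hc : 0 ≤ c)
    (h : ∀ x y : Fin m → ℝ, |x ⬝ᵥ (M *ᵥ y)| ≤ c * (vnorm x * vnorm y)) :
    specNorm M ≤ c := by
  apply ContinuousLinearMap.opNorm_le_bound _ hc
  intro v
  set y := WithLp.equiv 2 (Fin m → ℝ) v with hy
  have hv : v = (WithLp.equiv 2 (Fin m → ℝ)).symm y := rfl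
  have hTv : LinearMap.toContinuousLinearMap (Matrix.toEuclideanLin M) v
      = (WithLp.equiv 2 (Fin m → ℝ)).symm (M *ᵥ y) := by
    rw [hv]
    simp [LinearMap.coe_toContinuousLinearMap', Matrix.toEuclideanLin_apply]
  rw [hTv, ← vnorm_eq', hv, ← vnorm_eq']
  have key := h (M *ᵥ y) y
  have hself : (M *ᵥ y) ⬝ᵥ (M *ᵥ y) = vnorm (M *ᵥ y) ^ 2 := by
    rw [vnorm_sq']; simp [dotProduct, sq]
  have h0 : 0 ≤ (M *ᵥ y) ⬝ᵥ (M *ᵥ y) := by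
    rw [hself]; positivity
  rw [abs_of_nonneg h0, hself] at key
  have p0 := vnorm_nonneg' (M *ᵥ y)
  have q0 := vnorm_nonneg' y
  rcases eq_or_lt_of_le p0 with hp | hp
  · rw [← hp]; positivity
  · nlinarith

open scoped MatrixOrder in
lemma hadamard_dot_le' {m : ℕ} (A M : Matrix (Fin m) (Fin m) ℝ)
    (hA : A.PosSemidef) (hA1 : ∀ i, A i i ≤ 1) (x y : Fin m → ℝ) :
    |x ⬝ᵥ (Matrix.hadamard A M *ᵥ y)| ≤ specNorm M * (vnorm x * vnorm y) := by
  classical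
  set B := CFC.sqrt A with hBdef
  have hBB : B * B = A := CFC.sqrt_mul_sqrt_self A hA.nonneg
  have hsym : ∀ i j : Fin m, B i j = B j i := by
    intro i j
    have := (CFC.sqrt_nonneg A).posSemidef.isHermitian.apply i j
    simpa using this.symm
  have hAentry : ∀ i j, A i j = ∑ k, B k i * B k j := by
    intro i j
    rw [← hBB, Matrix.mul_apply]
    exact Finset.sum_congr rfl fun k _ => by rw [hsym i k]
  set f : Fin m → Fin m → ℝ := fun k i => x i * B k i with hf
  set g : Fin m → Fin m → ℝ := fun k j => y j * B k j with hg
  have key : x ⬝ᵥ (Matrix.hadamard A M *ᵥ y) = ∑ k, (f k ⬝ᵥ (M *ᵥ g k)) := by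
    have L : x ⬝ᵥ (Matrix.hadamard A M *ᵥ y)
        = ∑ i, ∑ j, ∑ k, x i * B k i * M i j * (y j * B k j) := by
      simp only [dotProduct, mulVec, Matrix.hadamard_apply, hAentry,
        Finset.sum_mul, Finset.mul_sum]
      refine Finset.sum_congr rfl fun i _ => Finset.sum_congr rfl fun j _ =>
        Finset.sum_congr rfl fun k _ => by ring
    have R : ∑ k, (f k ⬝ᵥ (M *ᵥ g k))
        = ∑ k, ∑ i, ∑ j, x i * B k i * M i j * (y j * B k j) := by
      simp only [dotProduct, mulVec, hf, hg, Finset.mul_sum]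
      refine Finset.sum_congr rfl fun k _ => Finset.sum_congr rfl fun i _ =>
        Finset.sum_congr rfl fun j _ => by ring
    rw [L, R]
    rw [Finset.sum_congr rfl fun i (_ : i ∈ Finset.univ) => Finset.sum_comm]
    exact Finset.sum_comm
  rw [key]
  have step1 : |∑ k, (f k ⬝ᵥ (M *ᵥ g k))| ≤ ∑ k, specNorm M * (vnorm (f k) * vnorm (g k)) :=
    (Finset.abs_sum_le_sum_abs _ _).trans
      (Finset.sum_le_sum fun k _ => dot_le' M (f k) (g k))
  have sumf : ∀ (z : Fin m → ℝ), ∑ k, vnorm (fun i => z i * B k i) ^ 2 ≤ vnorm z ^ 2 := by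
    intro z
    have : ∑ k, vnorm (fun i => z i * B k i) ^ 2 = ∑ i, z i ^ 2 * A i i := by
      simp only [vnorm_sq']
      rw [Finset.sum_comm]
      refine Finset.sum_congr rfl fun i _ => ?_
      rw [hAentry i i, Finset.mul_sum]
      exact Finset.sum_congr rfl fun k _ => by ring
    rw [this, vnorm_sq']
    exact Finset.sum_le_sum fun i _ => by nlinarith [sq_nonneg (z i), hA1 i]
  have cs : ∑ k, vnorm (f k) * vnorm (g k) ≤ vnorm x * vnorm y := by
    have h2 := Finset.sum_mul_sq_le_sq_mul_sq Finset.univ (fun k => vnorm (f k))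
      (fun k => vnorm (g k))
    have hx := sumf x
    have hy := sumf y
    have hnn : 0 ≤ ∑ k, vnorm (f k) * vnorm (g k) :=
      Finset.sum_nonneg fun k _ => mul_nonneg (vnorm_nonneg' _) (vnorm_nonneg' _)
    have hQ : 0 ≤ ∑ k, vnorm (g k) ^ 2 := Finset.sum_nonneg fun _ _ => sq_nonneg _
    have h3 : (∑ k, vnorm (f k) * vnorm (g k)) ^ 2 ≤ (vnorm x * vnorm y) ^ 2 := by
      rw [mul_pow]
      exact h2.trans (mul_le_mul hx hy hQ (sq_nonneg _))
    exact (pow_le_pow_iff_left₀ hnn (mul_nonneg (vnorm_nonneg' x) (vnorm_nonneg' y))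
      two_ne_zero).mp h3
  calc |∑ k, (f k ⬝ᵥ (M *ᵥ g k))| ≤ ∑ k, specNorm M * (vnorm (f k) * vnorm (g k)) := step1
    _ = specNorm M * ∑ k, vnorm (f k) * vnorm (g k) := by rw [Finset.mul_sum]
    _ ≤ specNorm M * (vnorm x * vnorm y) := by
        have : (0:ℝ) ≤ specNorm M := norm_nonneg _
        exact mul_le_mul_of_nonneg_left cs this

/-- **Spectral expanders are universal sparsifiers for PSD matrices.**
If `‖𝟏 − S‖₂ ≤ ε n`, then for every PSD matrix `A` with entries bounded by 1 in
magnitude, `‖A − A ∘ S‖₂ ≤ ε n`. -/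
theorem universal_sparsifier_psd
    (n : ℕ) (hn : 1 ≤ n) (ε : ℝ) (hε : ε ∈ Set.Ioo (0 : ℝ) 1)
    (S : Matrix (Fin n) (Fin n) ℝ)
    (hS : specNorm (allOnes n - S) ≤ ε * n) :
    ∀ A : Matrix (Fin n) (Fin n) ℝ, A.PosSemidef → (∀ i j, |A i j| ≤ 1) →
      specNorm (A - Matrix.hadamard A S) ≤ ε * n := by
  obtain ⟨hε0, hε1⟩ := hε
  intro A hPSD hbd
  have hNM : A - Matrix.hadamard A S = Matrix.hadamard A (allOnes n - S) := by
    ext i j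
    simp [Matrix.hadamard_apply, Matrix.sub_apply, allOnes, mul_sub]
  rw [hNM]
  have hc : (0:ℝ) ≤ ε * n := by positivity
  apply specNorm_le_of' _ _ hc
  intro x y
  have h1 := hadamard_dot_le' A (allOnes n - S) hPSD
    (fun i => (abs_le.mp (hbd i i)).2) x y
  refine h1.trans (mul_le_mul_of_nonneg_right hS ?_)
  exact mul_nonneg (vnorm_nonneg' _) (vnorm_nonneg' _)
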